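/- Let 0 < a < b be real numbers and let n be a positive even integer. Then for all real x, the polynomial S_n(x) = T_{n/2}((2x² − a² − b²)/(b² − a²)) satisfies the identity (b² − x²)(x² − a²)·(S_n′(x))² + n²·x²·(S_n(x))² = n²·x². -/

import Mathlib

open Polynomial Set

lemma pell_complex (k : ℤ) (z : ℂ) :
    (Polynomial.Chebyshev.T ℂ k).eval z ^ 2
      + (1 - z ^ 2) * (Polynomial.Chebyshev.U ℂ (k - 1)).eval z ^ 2 = 1 := by
  obtain ⟨θ, rfl⟩ := Complex.cos_surjective z
  have hT := Polynomial.Chebyshev.T_complex_cos θ k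
  have hU := Polynomial.Chebyshev.U_complex_cos θ (k - 1)
  have hU' : (Polynomial.Chebyshev.U ℂ (k - 1)).eval (Complex.cos θ) * Complex.sin θ
      = Complex.sin ((k : ℂ) * θ) := by
    rw [hU]; push_cast; ring_nf
  have h1 := Complex.sin_sq_add_cos_sq θ
  have h2 := Complex.sin_sq_add_cos_sq ((k : ℂ) * θ)
  have hU2 : (Polynomial.Chebyshev.U ℂ (k - 1)).eval (Complex.cos θ) ^ 2 * Complex.sin θ ^ 2
      = Complex.sin ((k : ℂ) * θ) ^ 2 := by
    rw [← mul_pow, hU']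
  rw [hT]
  linear_combination h2 + hU2
    - (Polynomial.Chebyshev.U ℂ (k - 1)).eval (Complex.cos θ) ^ 2 * h1

lemma pell_real (k : ℤ) (x : ℝ) :
    (Polynomial.Chebyshev.T ℝ k).eval x ^ 2
      + (1 - x ^ 2) * (Polynomial.Chebyshev.U ℝ (k - 1)).eval x ^ 2 = 1 := by
  have h := pell_complex k (x : ℂ)
  rw [← Polynomial.Chebyshev.complex_ofReal_eval_T,
    ← Polynomial.Chebyshev.complex_ofReal_eval_U] at h
  exact_mod_cast h

theorem Sn_pell_identity
    (a b : ℝ) (ha : 0 < a) (hab : a < b)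
    (n : ℕ) (hn : 0 < n) (hne : Even n)
    (S : ℝ → ℝ)
    (hS : ∀ x : ℝ, S x =
      (Polynomial.Chebyshev.T ℝ ((n / 2 : ℕ) : ℤ)).eval
        ((2 * x ^ 2 - a ^ 2 - b ^ 2) / (b ^ 2 - a ^ 2))) :
    ∀ x : ℝ,
      (b ^ 2 - x ^ 2) * (x ^ 2 - a ^ 2) * (deriv S x) ^ 2 +
          (n : ℝ) ^ 2 * x ^ 2 * (S x) ^ 2 = (n : ℝ) ^ 2 * x ^ 2 := by
  intro x
  set m : ℤ := ((n / 2 : ℕ) : ℤ) with hm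
  have hc : b ^ 2 - a ^ 2 ≠ 0 := by nlinarith
  set c : ℝ := b ^ 2 - a ^ 2 with hcdef
  set u : ℝ → ℝ := fun y => (2 * y ^ 2 - a ^ 2 - b ^ 2) / c with hu
  -- derivative of u
  have hud : HasDerivAt u (4 * x / c) x := by
    have h1 : HasDerivAt (fun y : ℝ => 2 * y ^ 2 - a ^ 2 - b ^ 2) (4 * x) x := by
      have h := (((hasDerivAt_pow 2 x).const_mul (2 : ℝ)).sub_const (a ^ 2)).sub_const (b ^ 2)
      refine h.congr_deriv ?_
      push_cast
      ring
    exact h1.div_const c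
  -- derivative of S
  have hSfun : S = fun y => (Polynomial.Chebyshev.T ℝ m).eval (u y) := by
    funext y; rw [hS y]
  have hSd : HasDerivAt S
      ((derivative (Polynomial.Chebyshev.T ℝ m)).eval (u x) * (4 * x / c)) x := by
    rw [hSfun]
    exact (Polynomial.hasDerivAt (Polynomial.Chebyshev.T ℝ m) (u x)).comp x hud
  have hder : deriv S x = (m : ℝ) * (Polynomial.Chebyshev.U ℝ (m - 1)).eval (u x)
      * (4 * x / c) := by
    rw [hSd.deriv, Polynomial.Chebyshev.T_derivative_eq_U]
    simp
  -- key facts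
  have hux : u x = (2 * x ^ 2 - a ^ 2 - b ^ 2) / c := rfl
  have h1' : c ^ 2 - c ^ 2 * (u x) ^ 2 = 4 * (b ^ 2 - x ^ 2) * (x ^ 2 - a ^ 2) := by
    rw [hux]
    field_simp
    ring
  have h2 := pell_real m (u x)
  have hn2 : (n : ℝ) = 2 * (m : ℝ) := by
    obtain ⟨k, hk⟩ := hne
    have h : n / 2 = k := by omega
    rw [hm, h, hk]
    push_cast
    ring
  set t := (Polynomial.Chebyshev.T ℝ m).eval (u x) with ht
  set v := (Polynomial.Chebyshev.U ℝ (m - 1)).eval (u x) with hv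
  have hSx : S x = t := by rw [hS x]
  rw [hSx, hder, hn2]
  have hc2 : c ^ 2 ≠ 0 := pow_ne_zero 2 hc
  field_simp
  linear_combination (4 * (m : ℝ) ^ 2 * x ^ 2 * c ^ 2) * h2
    - (4 * (m : ℝ) ^ 2 * x ^ 2 * v ^ 2) * h1'
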